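/- Consider the convex program: minimize $\sum_{q=1}^n c_q \psi(w_q)$ subject to $|\sum_q w_q B_k(x_q) - B_k^*| \le \delta_k$ for all $k$ and $w_q \ge 0$, with $\psi$ strictly convex differentiable and $c_q > 0$. If $\hat w$ is primal optimal and $\lambda^\dagger$ is an optimal dual vector for the balance constraints, then for every unit $q$, $\hat w_q = \rho'\{B(x_q)^\top \lambda^\dagger / c_q\} \cdot \mathbf{1}\{\rho'\{B(x_q)^\top \lambda^\dagger / c_q\} > 0\}$, where $\rho'(v) = -(h')^{-1}(v)$ and $h(x) = \psi(-x)$. -/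

import Mathlib

open Filter Set Topology

private lemma right_min_deriv' {f : ℝ → ℝ} {a d : ℝ} (hf : HasDerivAt f d a)
    (h : ∀ᶠ t in 𝓝[>] a, f a ≤ f t) : 0 ≤ d := by
  have hs : Tendsto (slope f a) (𝓝[≠] a) (𝓝 d) := hasDerivAt_iff_tendsto_slope.1 hf
  have hs' : Tendsto (slope f a) (𝓝[>] a) (𝓝 d) :=
    hs.mono_left (nhdsWithin_mono _ (fun y hy => ne_of_gt hy))
  refine ge_of_tendsto hs' ?_
  filter_upwards [h, self_mem_nhdsWithin] with y hy hy'
  have h1 : 0 ≤ f y - f a := sub_nonneg.2 hy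
  have hya : 0 < y - a := sub_pos.2 hy'
  simpa [slope_def_field, div_eq_inv_mul] using div_nonneg h1 hya.le

private lemma left_min_deriv' {f : ℝ → ℝ} {a d : ℝ} (hf : HasDerivAt f d a)
    (h : ∀ᶠ t in 𝓝[<] a, f a ≤ f t) : d ≤ 0 := by
  have hs : Tendsto (slope f a) (𝓝[≠] a) (𝓝 d) := hasDerivAt_iff_tendsto_slope.1 hf
  have hs' : Tendsto (slope f a) (𝓝[<] a) (𝓝 d) :=
    hs.mono_left (nhdsWithin_mono _ (fun y hy => ne_of_lt hy))
  refine le_of_tendsto hs' ?_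
  filter_upwards [h, self_mem_nhdsWithin] with y hy hy'
  have h1 : 0 ≤ f y - f a := sub_nonneg.2 hy
  have h2 : y - a < 0 := sub_neg.2 hy'
  simpa [slope_def_field, div_eq_inv_mul] using div_nonpos_of_nonneg_of_nonpos h1 h2.le

private lemma split_sum {m : ℕ} (f : Fin m → ℝ) (k : Fin m) :
    ∑ j, f j = f k + ∑ j ∈ Finset.univ.erase k, f j :=
  (Finset.add_sum_erase _ f (Finset.mem_univ k)).symm

/-- Stationarity in the `u`-coordinate. -/
private lemma stat_u {φ ρ : ℝ → ℝ} (hρ : ∀ v, HasDerivAt ρ (-(φ v)) v)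
    {cq aq uq : ℝ} (hcq : 0 < cq) (huq : 0 ≤ uq)
    (hmin : ∀ t, 0 ≤ t → -cq * ρ ((aq - uq) / cq) ≤ -cq * ρ ((aq - t) / cq)) :
    φ ((aq - uq) / cq) ≤ 0 ∧ (0 < uq → φ ((aq - uq) / cq) = 0) := by
  have hD : HasDerivAt (fun t => -cq * ρ ((aq - t) / cq)) (-(φ ((aq - uq) / cq))) uq := by
    have h1 : HasDerivAt (fun t : ℝ => (aq - t) / cq) (-1 / cq) uq := by
      simpa using ((hasDerivAt_id uq).const_sub aq).div_const cq
    have h2 := ((hρ ((aq - uq) / cq)).comp uq h1).const_mul (-cq)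
    refine h2.congr_deriv ?_
    have hne := hcq.ne'
    field_simp
  have h0 : 0 ≤ -(φ ((aq - uq) / cq)) := by
    refine right_min_deriv' hD ?_
    filter_upwards [self_mem_nhdsWithin] with t ht
    exact hmin t (huq.trans (le_of_lt ht))
  refine ⟨by linarith, fun hpos => ?_⟩
  have hle : -(φ ((aq - uq) / cq)) ≤ 0 := by
    refine left_min_deriv' hD ?_
    filter_upwards [Ioo_mem_nhdsLT_of_mem (⟨hpos, le_refl uq⟩ : uq ∈ Ioc (0:ℝ) uq)] with t ht
    exact hmin t ht.1.le
  linarith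

/-- Stationarity in one `λ`-coordinate. -/
private lemma stat_lam {φ ρ : ℝ → ℝ} (hρ : ∀ v, HasDerivAt ρ (-(φ v)) v)
    {m : ℕ} (b A cv : Fin m → ℝ) (hc : ∀ p, 0 < cv p)
    (Bs dk t0 : ℝ) (hdk : 0 ≤ dk)
    (hmin : ∀ t, (∑ p, -(cv p) * ρ ((b p * t0 + A p) / cv p)) + Bs * t0 + |t0| * dk
        ≤ (∑ p, -(cv p) * ρ ((b p * t + A p) / cv p)) + Bs * t + |t| * dk) :
    |(∑ p, -(φ ((b p * t0 + A p) / cv p)) * b p) - Bs| ≤ dk ∧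
      t0 * ((∑ p, -(φ ((b p * t0 + A p) / cv p)) * b p) - Bs) = |t0| * dk := by
  set E : ℝ := (∑ p, -(φ ((b p * t0 + A p) / cv p)) * b p) - Bs with hE
  have hG : HasDerivAt
      (fun t => (∑ p, -(cv p) * ρ ((b p * t + A p) / cv p)) + Bs * t) (-E) t0 := by
    have hterm : ∀ p : Fin m, HasDerivAt
        (fun t => -(cv p) * ρ ((b p * t + A p) / cv p))
        (φ ((b p * t0 + A p) / cv p) * b p) t0 := by
      intro p
      have h1 : HasDerivAt (fun t : ℝ => (b p * t + A p) / cv p) (b p / cv p) t0 := by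
        simpa using (((hasDerivAt_id t0).const_mul (b p)).add_const (A p)).div_const (cv p)
      have h2 := ((hρ ((b p * t0 + A p) / cv p)).comp t0 h1).const_mul (-(cv p))
      refine h2.congr_deriv ?_
      have hne := (hc p).ne'
      have hcb : cv p * (b p / cv p) = b p := mul_div_cancel₀ _ hne
      linear_combination (φ ((b p * t0 + A p) / cv p)) * hcb
    have hsum := HasDerivAt.fun_sum (fun p (_ : p ∈ Finset.univ) => hterm p)
    have hfull := hsum.add ((hasDerivAt_id t0).const_mul Bs)
    refine hfull.congr_deriv ?_
    rw [hE]
    simp only [neg_mul, Finset.sum_neg_distrib]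
    ring
  have hδplus : ∀ d', HasDerivAt
      (fun t => ((∑ p, -(cv p) * ρ ((b p * t + A p) / cv p)) + Bs * t) + t * d')
      (-E + d') t0 := fun d' => hG.add (hasDerivAt_mul_const d')
  rcases lt_trichotomy t0 0 with ht0 | ht0 | ht0
  · -- t0 < 0 : E = -dk
    have hr : 0 ≤ -E + -dk := by
      refine right_min_deriv' (hδplus (-dk)) ?_
      filter_upwards [Ioo_mem_nhdsGT_of_mem (⟨le_refl t0, ht0⟩ : t0 ∈ Ico t0 (0:ℝ))] with t ht
      have h := hmin t
      rw [abs_of_neg ht0, abs_of_neg ht.2] at h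
      linarith
    have hl : -E + -dk ≤ 0 := by
      refine left_min_deriv' (hδplus (-dk)) ?_
      filter_upwards [self_mem_nhdsWithin] with t ht
      have h := hmin t
      rw [abs_of_neg ht0, abs_of_neg (ht.trans ht0)] at h
      linarith
    have hEeq : E = -dk := by linarith
    constructor
    · rw [hEeq, abs_neg, abs_of_nonneg hdk]
    · rw [hEeq, abs_of_neg ht0]; ring
  · -- t0 = 0 : |E| ≤ dk
    have hr : 0 ≤ -E + dk := by
      refine right_min_deriv' (hδplus dk) ?_
      filter_upwards [self_mem_nhdsWithin] with t ht
      have ht' : (0:ℝ) < t := by rw [← ht0]; exact ht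
      have h := hmin t
      rw [ht0, abs_zero, abs_of_pos ht'] at h
      rw [ht0]
      linarith
    have hl : -E + -dk ≤ 0 := by
      refine left_min_deriv' (hδplus (-dk)) ?_
      filter_upwards [self_mem_nhdsWithin] with t ht
      have ht' : t < (0:ℝ) := by rw [← ht0]; exact ht
      have h := hmin t
      rw [ht0, abs_zero, abs_of_neg ht'] at h
      rw [ht0]
      linarith
    constructor
    · rw [abs_le]; constructor <;> linarith
    · rw [ht0]; simp
  · -- t0 > 0 : E = dk
    have hr : 0 ≤ -E + dk := by
      refine right_min_deriv' (hδplus dk) ?_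
      filter_upwards [self_mem_nhdsWithin] with t ht
      have h := hmin t
      rw [abs_of_pos ht0, abs_of_pos (ht0.trans ht)] at h
      linarith
    have hl : -E + dk ≤ 0 := by
      refine left_min_deriv' (hδplus dk) ?_
      filter_upwards [Ioo_mem_nhdsLT_of_mem (⟨ht0, le_refl t0⟩ : t0 ∈ Ioc (0:ℝ) t0)] with t ht
      have h := hmin t
      rw [abs_of_pos ht0, abs_of_pos ht.1] at h
      linarith
    have hEeq : E = dk := by linarith
    constructor
    · rw [hEeq, abs_of_nonneg hdk]
    · rw [hEeq, abs_of_pos ht0]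


private lemma psi_tangent {ψ ψ' : ℝ → ℝ} (hconv : StrictConvexOn ℝ Set.univ ψ)
    (hψ : ∀ y, HasDerivAt ψ (ψ' y) y) (s t : ℝ) :
    ψ s + ψ' s * (t - s) ≤ ψ t := by
  rcases lt_trichotomy s t with h | h | h
  · have h1 := hconv.lt_slope_of_hasDerivAt (mem_univ s) (mem_univ t) h (hψ s)
    rw [slope_def_field] at h1
    have hts : (0:ℝ) < t - s := sub_pos.2 h
    have h2 := (lt_div_iff₀ hts).1 h1
    linarith
  · subst h; simp
  · have h1 := hconv.slope_lt_of_hasDerivAt (mem_univ t) (mem_univ s) h (hψ s)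
    rw [slope_def_field] at h1
    have hst : (0:ℝ) < s - t := sub_pos.2 h
    have h2 := (div_lt_iff₀ hst).1 h1
    nlinarith

private lemma psi_deriv_strictMono {ψ ψ' : ℝ → ℝ} (hconv : StrictConvexOn ℝ Set.univ ψ)
    (hψ : ∀ y, HasDerivAt ψ (ψ' y) y) : StrictMono ψ' := by
  intro s t hst
  have h1 := hconv.lt_slope_of_hasDerivAt (mem_univ s) (mem_univ t) hst (hψ s)
  have h2 := hconv.slope_lt_of_hasDerivAt (mem_univ s) (mem_univ t) hst (hψ t)
  exact h1.trans h2


/-- Dual characterization of the optimal balancing weights (Theorem S.1(b)):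
if `ŵ` is primal optimal for the scaled, non-negatively constrained balancing
problem and `(lam, u)` is optimal for the dual problem (with `u ≥ 0` the
multipliers for the non-negativity constraints), then
`ŵ_q = ρ'(B(x_q)ᵀlam / c_q)·1{ρ'(B(x_q)ᵀlam / c_q) > 0}`, where
`ρ'(v) = -(h')⁻¹(v) = -φ(v)` and `h(x) = ψ(-x)` (so `h'(y) = -ψ'(-y)`). -/
theorem stmt_6 {X : Type*} (n K : ℕ) (x : Fin n → X)
    (B : Fin K → X → ℝ) (Bstar : Fin K → ℝ) (δ : Fin K → ℝ)
    (c : Fin n → ℝ) (hc : ∀ q, 0 < c q)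
    (ψ ψ' : ℝ → ℝ) (hconv : StrictConvexOn ℝ Set.univ ψ)
    (hψ : ∀ y, HasDerivAt ψ (ψ' y) y)
    (φ : ℝ → ℝ) (hφ₁ : ∀ v, -ψ' (-(φ v)) = v) (hφ₂ : ∀ y, φ (-ψ' (-y)) = y)
    (ρ : ℝ → ℝ) (hρ : ∀ v, HasDerivAt ρ (-(φ v)) v)
    (w0 : Fin n → ℝ)
    (hfeas : (∀ k, |∑ q, w0 q * B k (x q) - Bstar k| ≤ δ k) ∧ ∀ q, 0 ≤ w0 q)
    (hopt : ∀ w : Fin n → ℝ,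
      ((∀ k, |∑ q, w q * B k (x q) - Bstar k| ≤ δ k) ∧ ∀ q, 0 ≤ w q) →
      ∑ q, c q * ψ (w0 q) ≤ ∑ q, c q * ψ (w q))
    (lam : Fin K → ℝ) (u : Fin n → ℝ) (hu : ∀ q, 0 ≤ u q)
    (hdual : ∀ (lam' : Fin K → ℝ) (u' : Fin n → ℝ), (∀ q, 0 ≤ u' q) →
      (∑ q, -(c q) * ρ (((∑ k, B k (x q) * lam k) - u q) / c q))
          + (∑ k, Bstar k * lam k) + (∑ k, |lam k| * δ k)
        ≤ (∑ q, -(c q) * ρ (((∑ k, B k (x q) * lam' k) - u' q) / c q))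
          + (∑ k, Bstar k * lam' k) + (∑ k, |lam' k| * δ k)) :
    ∀ q, w0 q =
      if 0 < -(φ ((∑ k, B k (x q) * lam k) / c q))
      then -(φ ((∑ k, B k (x q) * lam k) / c q)) else 0 := by
  classical
  have hδ : ∀ k, 0 ≤ δ k := fun k => (abs_nonneg _).trans (hfeas.1 k)
  have hψ'mono : StrictMono ψ' := psi_deriv_strictMono hconv hψ
  have hφmono : Monotone φ := by
    intro s t hst
    by_contra hlt
    push_neg at hlt
    have h2 : ψ' (-(φ s)) < ψ' (-(φ t)) := hψ'mono (by linarith)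
    have h3 : -ψ' (-(φ t)) < -ψ' (-(φ s)) := by linarith
    rw [hφ₁, hφ₁] at h3
    linarith
  set w : Fin n → ℝ := fun p => -(φ (((∑ j, B j (x p) * lam j) - u p) / c p)) with hw
  -- stationarity in u
  have hstatu : ∀ p, φ (((∑ j, B j (x p) * lam j) - u p) / c p) ≤ 0 ∧
      (0 < u p → φ (((∑ j, B j (x p) * lam j) - u p) / c p) = 0) := by
    intro p
    refine stat_u hρ (hc p) (hu p) ?_
    intro t ht
    have hupd : ∀ r, 0 ≤ Function.update u p t r := by
      intro r
      rcases eq_or_ne r p with hr | hr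
      · subst hr; simpa using ht
      · rw [Function.update_of_ne hr]; exact hu r
    have hd := hdual lam (Function.update u p t) hupd
    have e1 : (∑ q, -(c q) * ρ (((∑ k, B k (x q) * lam k) - Function.update u p t q) / c q))
        = -(c p) * ρ (((∑ k, B k (x p) * lam k) - t) / c p)
          + ∑ q ∈ Finset.univ.erase p, -(c q) * ρ (((∑ k, B k (x q) * lam k) - u q) / c q) := by
      rw [split_sum (fun q => -(c q) * ρ (((∑ k, B k (x q) * lam k)
          - Function.update u p t q) / c q)) p]
      congr 1
      · simp
      · exact Finset.sum_congr rfl fun q hq => by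
          rw [Function.update_of_ne (Finset.ne_of_mem_erase hq)]
    have e2 : (∑ q, -(c q) * ρ (((∑ k, B k (x q) * lam k) - u q) / c q))
        = -(c p) * ρ (((∑ k, B k (x p) * lam k) - u p) / c p)
          + ∑ q ∈ Finset.univ.erase p, -(c q) * ρ (((∑ k, B k (x q) * lam k) - u q) / c q) :=
      split_sum _ p
    rw [e1, e2] at hd
    linarith
  have hwnn : ∀ p, 0 ≤ w p := fun p => neg_nonneg.2 (hstatu p).1
  have hcs : ∀ p, u p * w p = 0 := by
    intro p
    rcases (hu p).eq_or_lt with h | h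
    · rw [← h, zero_mul]
    · have hz := (hstatu p).2 h
      show u p * -(φ (((∑ j, B j (x p) * lam j) - u p) / c p)) = 0
      rw [hz]; ring
  -- stationarity in lambda
  have hkey : ∀ k : Fin K, |(∑ p, w p * B k (x p)) - Bstar k| ≤ δ k ∧
      lam k * ((∑ p, w p * B k (x p)) - Bstar k) = |lam k| * δ k := by
    intro k
    have harg : ∀ p, (B k (x p) * lam k
          + ((∑ j ∈ Finset.univ.erase k, B j (x p) * lam j) - u p)) / c p
        = ((∑ j, B j (x p) * lam j) - u p) / c p := by
      intro p
      rw [split_sum (fun j => B j (x p) * lam j) k]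
      congr 1
      ring
    have hinner : ∀ (t' : ℝ) (p : Fin n),
        (∑ j, B j (x p) * Function.update lam k t' j)
          = B k (x p) * t' + ∑ j ∈ Finset.univ.erase k, B j (x p) * lam j := by
      intro t' p
      rw [split_sum (fun j => B j (x p) * Function.update lam k t' j) k]
      congr 1
      · simp
      · exact Finset.sum_congr rfl fun j hj => by
          rw [Function.update_of_ne (Finset.ne_of_mem_erase hj)]
    have f1 : ∀ t' : ℝ,
        (∑ q, -(c q) * ρ (((∑ j, B j (x q) * Function.update lam k t' j) - u q) / c q))
          = ∑ p, -(c p) * ρ ((B k (x p) * t'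
              + ((∑ j ∈ Finset.univ.erase k, B j (x p) * lam j) - u p)) / c p) := by
      intro t'
      refine Finset.sum_congr rfl fun p _ => ?_
      rw [hinner t' p]
      congr 2
      ring
    have f1l : (∑ q, -(c q) * ρ (((∑ j, B j (x q) * lam j) - u q) / c q))
        = ∑ p, -(c p) * ρ ((B k (x p) * lam k
            + ((∑ j ∈ Finset.univ.erase k, B j (x p) * lam j) - u p)) / c p) := by
      have := f1 (lam k)
      rwa [Function.update_eq_self] at this
    have f2 : ∀ t' : ℝ, (∑ j, Bstar j * Function.update lam k t' j)
        = Bstar k * t' + ∑ j ∈ Finset.univ.erase k, Bstar j * lam j := by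
      intro t'
      rw [split_sum (fun j => Bstar j * Function.update lam k t' j) k]
      congr 1
      · simp
      · exact Finset.sum_congr rfl fun j hj => by
          rw [Function.update_of_ne (Finset.ne_of_mem_erase hj)]
    have f2l : (∑ j, Bstar j * lam j)
        = Bstar k * lam k + ∑ j ∈ Finset.univ.erase k, Bstar j * lam j := split_sum _ k
    have f3 : ∀ t' : ℝ, (∑ j, |Function.update lam k t' j| * δ j)
        = |t'| * δ k + ∑ j ∈ Finset.univ.erase k, |lam j| * δ j := by
      intro t'
      rw [split_sum (fun j => |Function.update lam k t' j| * δ j) k]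
      congr 1
      · simp
      · exact Finset.sum_congr rfl fun j hj => by
          rw [Function.update_of_ne (Finset.ne_of_mem_erase hj)]
    have f3l : (∑ j, |lam j| * δ j)
        = |lam k| * δ k + ∑ j ∈ Finset.univ.erase k, |lam j| * δ j := split_sum _ k
    have hmin2 : ∀ t, (∑ p, -(c p) * ρ ((B k (x p) * lam k
            + ((∑ j ∈ Finset.univ.erase k, B j (x p) * lam j) - u p)) / c p))
          + Bstar k * lam k + |lam k| * δ k
        ≤ (∑ p, -(c p) * ρ ((B k (x p) * t
            + ((∑ j ∈ Finset.univ.erase k, B j (x p) * lam j) - u p)) / c p))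
          + Bstar k * t + |t| * δ k := by
      intro t
      have hd := hdual (Function.update lam k t) u hu
      rw [f1 t, f2 t, f3 t, f1l, f2l, f3l] at hd
      linarith
    have main : |(∑ p, -(φ ((B k (x p) * lam k
            + ((∑ j ∈ Finset.univ.erase k, B j (x p) * lam j) - u p)) / c p)) * B k (x p))
          - Bstar k| ≤ δ k ∧
        lam k * ((∑ p, -(φ ((B k (x p) * lam k
            + ((∑ j ∈ Finset.univ.erase k, B j (x p) * lam j) - u p)) / c p)) * B k (x p))
          - Bstar k) = |lam k| * δ k :=
      stat_lam hρ (fun p => B k (x p))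
        (fun p => (∑ j ∈ Finset.univ.erase k, B j (x p) * lam j) - u p) c hc
        (Bstar k) (δ k) (lam k) (hδ k) hmin2
    have e3 : (∑ p, -(φ ((B k (x p) * lam k
            + ((∑ j ∈ Finset.univ.erase k, B j (x p) * lam j) - u p)) / c p)) * B k (x p))
        = ∑ p, w p * B k (x p) :=
      Finset.sum_congr rfl fun p _ => by rw [harg p]
    rw [e3] at main
    exact main
  -- the candidate weights are feasible
  have hfeasw : (∀ k, |∑ q, w q * B k (x q) - Bstar k| ≤ δ k) ∧ ∀ q, 0 ≤ w q :=
    ⟨fun k => (hkey k).1, hwnn⟩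
  -- gradient identity
  have hψ'w : ∀ p, c p * ψ' (w p) = u p - (∑ j, B j (x p) * lam j) := by
    intro p
    have hval := hφ₁ (((∑ j, B j (x p) * lam j) - u p) / c p)
    have h1 : ψ' (w p) = -((((∑ j, B j (x p) * lam j)) - u p) / c p) := by
      show ψ' (-(φ (((∑ j, B j (x p) * lam j) - u p) / c p))) = _
      linarith
    rw [h1]
    have hne := (hc p).ne'
    field_simp
    ring
  have hswap : ∀ z : Fin n → ℝ,
      (∑ p, (∑ j, B j (x p) * lam j) * z p) = ∑ j, lam j * (∑ p, z p * B j (x p)) := by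
    intro z
    simp_rw [Finset.sum_mul, Finset.mul_sum]
    rw [Finset.sum_comm]
    exact Finset.sum_congr rfl fun j _ => Finset.sum_congr rfl fun p _ => by ring
  -- the candidate weights are optimal
  have hopt2 : (∑ p, c p * ψ (w p)) ≤ ∑ p, c p * ψ (w0 p) := by
    have step1 : ∀ p, c p * ψ (w p)
        + (u p - (∑ j, B j (x p) * lam j)) * (w0 p - w p) ≤ c p * ψ (w0 p) := by
      intro p
      have ht := psi_tangent hconv hψ (w p) (w0 p)
      have h2 := mul_le_mul_of_nonneg_left ht (hc p).le
      have e : c p * (ψ (w p) + ψ' (w p) * (w0 p - w p))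
          = c p * ψ (w p) + (c p * ψ' (w p)) * (w0 p - w p) := by ring
      rw [e, hψ'w p] at h2
      exact h2
    have S1 := Finset.sum_le_sum (fun p (_ : p ∈ Finset.univ) => step1 p)
    rw [Finset.sum_add_distrib] at S1
    have expand : (∑ p, (u p - (∑ j, B j (x p) * lam j)) * (w0 p - w p))
        = ((∑ p, u p * w0 p) - (∑ p, u p * w p)
            - (∑ p, (∑ j, B j (x p) * lam j) * w0 p))
          + ∑ p, (∑ j, B j (x p) * lam j) * w p := by
      rw [← Finset.sum_sub_distrib, ← Finset.sum_sub_distrib, ← Finset.sum_add_distrib]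
      exact Finset.sum_congr rfl fun p _ => by ring
    have t1 : (0:ℝ) ≤ ∑ p, u p * w0 p :=
      Finset.sum_nonneg fun p _ => mul_nonneg (hu p) (hfeas.2 p)
    have t2 : (∑ p, u p * w p) = 0 := Finset.sum_eq_zero fun p _ => hcs p
    have t5 : (∑ j, lam j * (∑ p, w p * B j (x p)))
        = ∑ j, (|lam j| * δ j + lam j * Bstar j) :=
      Finset.sum_congr rfl fun j _ => by
        have h := (hkey j).2
        linear_combination h
    have t6 : (∑ j, lam j * (∑ p, w0 p * B j (x p)))
        ≤ ∑ j, (|lam j| * δ j + lam j * Bstar j) := by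
      refine Finset.sum_le_sum fun j _ => ?_
      have h1 : lam j * ((∑ p, w0 p * B j (x p)) - Bstar j) ≤ |lam j| * δ j := by
        calc lam j * ((∑ p, w0 p * B j (x p)) - Bstar j)
            ≤ |lam j * ((∑ p, w0 p * B j (x p)) - Bstar j)| := le_abs_self _
          _ = |lam j| * |(∑ p, w0 p * B j (x p)) - Bstar j| := abs_mul _ _
          _ ≤ |lam j| * δ j := mul_le_mul_of_nonneg_left (hfeas.1 j) (abs_nonneg _)
      calc lam j * (∑ p, w0 p * B j (x p))
          = lam j * ((∑ p, w0 p * B j (x p)) - Bstar j) + lam j * Bstar j := by ring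
        _ ≤ |lam j| * δ j + lam j * Bstar j := by linarith
    have key : (0:ℝ) ≤ ∑ p, (u p - (∑ j, B j (x p) * lam j)) * (w0 p - w p) := by
      rw [expand, hswap w0, hswap w]
      linarith
    linarith
  have hopt1 := hopt w hfeasw
  have heq : (∑ p, c p * ψ (w p)) = ∑ p, c p * ψ (w0 p) := le_antisymm hopt2 hopt1
  -- uniqueness of the optimum
  have huniq : ∀ p, w0 p = w p := by
    by_contra hne
    push_neg at hne
    obtain ⟨p0, hp0⟩ := hne
    set z : Fin n → ℝ := fun p => (w0 p + w p) / 2 with hz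
    have hzsum : ∀ k, (∑ q, z q * B k (x q))
        = ((∑ q, w0 q * B k (x q)) + ∑ q, w q * B k (x q)) / 2 := by
      intro k
      rw [← Finset.sum_add_distrib, Finset.sum_div]
      refine Finset.sum_congr rfl fun q _ => ?_
      show ((w0 q + w q) / 2) * B k (x q) = _
      ring
    have hzfeas : (∀ k, |∑ q, z q * B k (x q) - Bstar k| ≤ δ k) ∧ ∀ q, 0 ≤ z q := by
      constructor
      · intro k
        have h0 := hfeas.1 k
        have h1 := (hkey k).1
        rw [hzsum k]
        have e : ((∑ q, w0 q * B k (x q)) + ∑ q, w q * B k (x q)) / 2 - Bstar k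
            = ((∑ q, w0 q * B k (x q)) - Bstar k) / 2
              + ((∑ q, w q * B k (x q)) - Bstar k) / 2 := by ring
        rw [e]
        calc |((∑ q, w0 q * B k (x q)) - Bstar k) / 2
              + ((∑ q, w q * B k (x q)) - Bstar k) / 2|
            ≤ |((∑ q, w0 q * B k (x q)) - Bstar k) / 2|
              + |((∑ q, w q * B k (x q)) - Bstar k) / 2| := abs_add_le _ _
          _ = |(∑ q, w0 q * B k (x q)) - Bstar k| / 2
              + |(∑ q, w q * B k (x q)) - Bstar k| / 2 := by
              rw [abs_div, abs_div]; norm_num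
          _ ≤ δ k := by linarith
      · intro q
        show 0 ≤ (w0 q + w q) / 2
        exact div_nonneg (add_nonneg (hfeas.2 q) (hwnn q)) (by norm_num)
    have hstrictp : ∀ p, w0 p ≠ w p →
        c p * ψ (z p) < c p * ((ψ (w0 p) + ψ (w p)) / 2) := by
      intro p hnep
      have hcv := hconv.2 (Set.mem_univ (w0 p)) (Set.mem_univ (w p)) hnep
        (by norm_num : (0:ℝ) < 1/2) (by norm_num : (0:ℝ) < 1/2) (by norm_num)
      simp only [smul_eq_mul] at hcv
      have e1 : (1/2 : ℝ) * w0 p + (1/2 : ℝ) * w p = (w0 p + w p) / 2 := by ring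
      rw [e1] at hcv
      have : ψ ((w0 p + w p) / 2) < (ψ (w0 p) + ψ (w p)) / 2 := by linarith
      show c p * ψ ((w0 p + w p) / 2) < c p * ((ψ (w0 p) + ψ (w p)) / 2)
      exact mul_lt_mul_of_pos_left this (hc p)
    have hle : ∀ p ∈ Finset.univ, c p * ψ (z p) ≤ c p * ((ψ (w0 p) + ψ (w p)) / 2) := by
      intro p _
      rcases eq_or_ne (w0 p) (w p) with he | hne2
      · show c p * ψ ((w0 p + w p) / 2) ≤ c p * ((ψ (w0 p) + ψ (w p)) / 2)
        rw [he]
        have e1 : (w p + w p) / 2 = w p := by ring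
        rw [e1]
        have e2 : (ψ (w p) + ψ (w p)) / 2 = ψ (w p) := by ring
        rw [e2]
      · exact (hstrictp p hne2).le
    have hlt := Finset.sum_lt_sum hle ⟨p0, Finset.mem_univ p0, hstrictp p0 hp0⟩
    have e2 : (∑ p, c p * ((ψ (w0 p) + ψ (w p)) / 2))
        = ((∑ p, c p * ψ (w0 p)) + ∑ p, c p * ψ (w p)) / 2 := by
      rw [← Finset.sum_add_distrib, Finset.sum_div]
      exact Finset.sum_congr rfl fun p _ => by ring
    rw [e2] at hlt
    have hcontra := hopt z hzfeas
    linarith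
  -- conclusion
  intro q
  rw [huniq q]
  rcases (hu q).eq_or_lt with h0 | h0
  · have hveq : ((∑ j, B j (x q) * lam j) - u q) / c q
        = (∑ j, B j (x q) * lam j) / c q := by rw [← h0, sub_zero]
    show -(φ (((∑ j, B j (x q) * lam j) - u q) / c q)) = _
    rw [hveq]
    split_ifs with hcond
    · rfl
    · push_neg at hcond
      have hle0 := (hstatu q).1
      rw [hveq] at hle0
      linarith
  · have hz0 := (hstatu q).2 h0
    show -(φ (((∑ j, B j (x q) * lam j) - u q) / c q)) = _
    rw [hz0]
    split_ifs with hcond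
    · exfalso
      have hlt2 : ((∑ j, B j (x q) * lam j) - u q) / c q
          < (∑ j, B j (x q) * lam j) / c q :=
        (div_lt_div_iff_of_pos_right (hc q)).2 (by linarith)
      have hmon := hφmono hlt2.le
      rw [hz0] at hmon
      linarith
    · norm_num
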